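/- Let Q be a quadratic form of signature (1,s) with s ≥ 1 on V = ℝ^{s+1}, with polar form B, and D_+ := {Q > 0}. Let c_1,…,c_{s+1} ∈ V be linearly independent vectors such that the simplicial cone R(C) := {x : B(c_j,x) ≥ 0 for all 1 ≤ j ≤ s+1} ∪ {x : B(c_j,x) ≤ 0 for all 1 ≤ j ≤ s+1} spans V and satisfies R(C) ⊆ D_+ ∪ {0}. Then for every proper subset T ⊊ {1,…,s+1}, Q restricted to span{c_j : j ∈ T} is negative definite (a subspace of dimension |T|). -/

import Mathlib

/-- Cauchy–Schwarz style key lemma: if `a` is "timelike" and `w ≠ 0` is orthogonal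
to `a` in the Lorentzian form, then `w` is "spacelike". -/
lemma stmt17_key (n : ℕ) (a w : Fin (n+1) → ℝ)
    (ha : ∑ i ∈ Finset.univ.erase (0 : Fin (n+1)), a i ^ 2 < a 0 ^ 2)
    (horth : a 0 * w 0 = ∑ i ∈ Finset.univ.erase (0 : Fin (n+1)), a i * w i)
    (hw : w ≠ 0) :
    w 0 ^ 2 < ∑ i ∈ Finset.univ.erase (0 : Fin (n+1)), w i ^ 2 := by
  set S := Finset.univ.erase (0 : Fin (n+1)) with hS
  have hSnn : (0:ℝ) ≤ ∑ i ∈ S, w i ^ 2 := Finset.sum_nonneg fun i _ => sq_nonneg _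
  have ha0 : 0 < a 0 ^ 2 := lt_of_le_of_lt (Finset.sum_nonneg fun i _ => sq_nonneg _) ha
  rcases eq_or_lt_of_le hSnn with h0 | hpos
  · exfalso
    have hz : ∀ i ∈ S, w i = 0 := by
      intro i hi
      have := (Finset.sum_eq_zero_iff_of_nonneg (fun i _ => sq_nonneg (w i))).1 h0.symm i hi
      exact pow_eq_zero_iff (two_ne_zero) |>.1 this
    have hzero : a 0 * w 0 = 0 := by
      rw [horth]; exact Finset.sum_eq_zero fun i hi => by rw [hz i hi, mul_zero]
    have ha0' : a 0 ≠ 0 := fun h => by rw [h] at ha0; simp at ha0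
    have hw0 : w 0 = 0 := (mul_eq_zero.1 hzero).resolve_left ha0'
    apply hw; funext i
    by_cases hi : i = 0
    · rw [hi]; exact hw0
    · exact hz i (Finset.mem_erase.2 ⟨hi, Finset.mem_univ i⟩)
  · have cs := Finset.sum_mul_sq_le_sq_mul_sq S a w
    rw [← horth] at cs
    nlinarith [sq_nonneg (a 0 * w 0)]

/-- For a simplicial cone `R(C) ⊆ D_+ ∪ {0}` in a quadratic space of signature `(1,s)` with
linearly independent normal vectors `c_1,…,c_{s+1}`, the span of any proper subset of the
normal vectors is a negative definite subspace of dimension `|T|`. -/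
theorem stmt17 (s : ℕ) (hs : 1 ≤ s) (Q : QuadraticForm ℝ (Fin (s+1) → ℝ))
    (hsig : ∃ b : Module.Basis (Fin (s+1)) ℝ (Fin (s+1) → ℝ), ∀ x, Q x =
      (b.repr x 0)^2 - ∑ i ∈ Finset.univ.erase (0 : Fin (s+1)), (b.repr x i)^2)
    (c : Fin (s+1) → (Fin (s+1) → ℝ)) (hindep : LinearIndependent ℝ c)
    (hsub : ({x : Fin (s+1) → ℝ | ∀ j, 0 ≤ QuadraticMap.polar Q (c j) x} ∪
              {x : Fin (s+1) → ℝ | ∀ j, QuadraticMap.polar Q (c j) x ≤ 0})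
        ⊆ {x : Fin (s+1) → ℝ | 0 < Q x} ∪ {0})
    (hspan : Submodule.span ℝ
        ({x : Fin (s+1) → ℝ | ∀ j, 0 ≤ QuadraticMap.polar Q (c j) x} ∪
         {x : Fin (s+1) → ℝ | ∀ j, QuadraticMap.polar Q (c j) x ≤ 0}) = ⊤)
    (T : Finset (Fin (s+1))) (hT : T ≠ Finset.univ) :
    (∀ x ∈ Submodule.span ℝ (c '' (T : Set (Fin (s+1)))), x ≠ 0 → Q x < 0) ∧
    Module.finrank ℝ (Submodule.span ℝ (c '' (T : Set (Fin (s+1))))) = T.card := by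
  classical
  obtain ⟨b, hQ⟩ := hsig
  set S := Finset.univ.erase (0 : Fin (s+1)) with hSdef
  -- the polar form in coordinates
  have hpolar : ∀ x y, QuadraticMap.polar Q x y =
      2 * (b.repr x 0 * b.repr y 0) - ∑ i ∈ S, 2 * (b.repr x i * b.repr y i) := by
    intro x y
    have hexp : ∑ i ∈ S, (b.repr x i + b.repr y i) ^ 2
        = (∑ i ∈ S, (b.repr x i) ^ 2) + (∑ i ∈ S, (b.repr y i) ^ 2)
          + ∑ i ∈ S, 2 * (b.repr x i * b.repr y i) := by
      rw [← Finset.sum_add_distrib, ← Finset.sum_add_distrib]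
      exact Finset.sum_congr rfl fun i _ => by ring
    simp only [QuadraticMap.polar, hQ, map_add, Finsupp.add_apply]
    rw [hexp]
    ring
  -- the map x ↦ (polar Q (c j) x)_j
  let L : (Fin (s+1) → ℝ) →ₗ[ℝ] (Fin (s+1) → ℝ) :=
    LinearMap.pi fun j => (QuadraticMap.polarBilin Q) (c j)
  have hLapply : ∀ x j, L x j = QuadraticMap.polar Q (c j) x := fun x j => rfl
  -- c spans everything
  have hctop : Submodule.span ℝ (Set.range c) = ⊤ := by
    apply hindep.span_eq_top_of_card_eq_finrank
    simp [Module.finrank_fintype_fun_eq_card]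
  -- L is injective
  have hLinj : Function.Injective L := by
    rw [← LinearMap.ker_eq_bot, LinearMap.ker_eq_bot']
    intro x hx
    have hcb : ∀ j, QuadraticMap.polar Q (c j) x = 0 := by
      intro j
      have := congrFun hx j
      simpa [hLapply] using this
    -- the functional v ↦ polar Q v x vanishes on a spanning set
    have hall : ∀ v, QuadraticMap.polar Q v x = 0 := by
      intro v
      have hv : v ∈ Submodule.span ℝ (Set.range c) := by rw [hctop]; trivial
      have hle : Submodule.span ℝ (Set.range c) ≤
          LinearMap.ker ((QuadraticMap.polarBilin Q).flip x) := by
        rw [Submodule.span_le]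
        rintro _ ⟨j, rfl⟩
        simpa [LinearMap.mem_ker] using hcb j
      exact hle hv
    -- evaluate on the basis vectors
    have hc0 : b.repr x 0 = 0 := by
      have := hall (b 0)
      rw [hpolar] at this
      simp [Module.Basis.repr_self, Finsupp.single_apply, hSdef] at this
      simpa using this
    have hci : ∀ i ∈ S, b.repr x i = 0 := by
      intro i hi
      have hi0 : i ≠ 0 := (Finset.mem_erase.1 hi).1
      have := hall (b i)
      rw [hpolar] at this
      rw [Finset.sum_eq_single i (fun k _ hk => by
        simp [Module.Basis.repr_self, Finsupp.single_apply, hk.symm, Ne.symm hk]) (fun h => absurd hi h)]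
        at this
      simp [Module.Basis.repr_self, Finsupp.single_apply, hi0] at this
      linarith
    have : b.repr x = 0 := by
      ext i
      by_cases hi : i = 0
      · rw [hi]; exact hc0
      · exact hci i (Finset.mem_erase.2 ⟨hi, Finset.mem_univ i⟩)
    have := congrArg b.repr.symm this
    simpa using this
  -- hence surjective; get z with polar Q (c j) z = [j ∉ T]
  have hLsurj : Function.Surjective L :=
    (LinearMap.injective_iff_surjective_of_finrank_eq_finrank rfl).1 hLinj
  obtain ⟨z, hz⟩ := hLsurj (fun j => if j ∈ T then 0 else 1)
  have hzval : ∀ j, QuadraticMap.polar Q (c j) z = if j ∈ T then 0 else 1 := by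
    intro j; rw [← hLapply, hz]
  -- z lies in the cone
  have hzmem : z ∈ ({x : Fin (s+1) → ℝ | ∀ j, 0 ≤ QuadraticMap.polar Q (c j) x} ∪
      {x : Fin (s+1) → ℝ | ∀ j, QuadraticMap.polar Q (c j) x ≤ 0}) := by
    left; intro j; rw [hzval]; positivity
  -- z ≠ 0
  obtain ⟨j₀, hj₀⟩ : ∃ j, j ∉ T := by
    by_contra h
    push_neg at h
    exact hT (Finset.eq_univ_iff_forall.2 h)
  have hzne : z ≠ 0 := by
    intro h
    have := hzval j₀
    rw [h, if_neg hj₀] at this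
    simp [QuadraticMap.polar] at this
  -- so Q z > 0
  have hQz : 0 < Q z := by
    rcases hsub hzmem with h | h
    · exact h
    · exact absurd h hzne
  -- coordinates of z
  have hzc : ∑ i ∈ S, (b.repr z i) ^ 2 < (b.repr z 0) ^ 2 := by
    have := hQ z; rw [this] at hQz; linarith
  constructor
  · -- negative definiteness
    intro x hx hxne
    -- polar Q z x = 0 since x ∈ span of the c j, j ∈ T
    have hle : Submodule.span ℝ (c '' (T : Set (Fin (s+1)))) ≤
        LinearMap.ker ((QuadraticMap.polarBilin Q) z) := by
      rw [Submodule.span_le]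
      rintro _ ⟨j, hj, rfl⟩
      have : QuadraticMap.polar Q z (c j) = 0 := by
        rw [QuadraticMap.polar_comm, hzval, if_pos (by exact_mod_cast hj)]
      simpa [LinearMap.mem_ker]
    have horth : QuadraticMap.polar Q z x = 0 := hle hx
    rw [hpolar] at horth
    have horth' : b.repr z 0 * b.repr x 0 = ∑ i ∈ S, b.repr z i * b.repr x i := by
      have hsum : ∑ i ∈ S, 2 * (b.repr z i * b.repr x i)
          = 2 * ∑ i ∈ S, b.repr z i * b.repr x i := by rw [Finset.mul_sum]
      rw [hsum] at horth; linarith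
    have hwne : (fun i => b.repr x i) ≠ 0 := by
      intro h
      apply hxne
      have : b.repr x = 0 := by ext i; exact congrFun h i
      have := congrArg b.repr.symm this
      simpa using this
    have := stmt17_key s (fun i => b.repr z i) (fun i => b.repr x i) hzc horth' hwne
    rw [hQ x]
    simpa using by linarith [this]
  · -- dimension count
    have himg : (c '' (T : Set (Fin (s+1)))) = ((T.image c : Finset (Fin (s+1) → ℝ)) :
        Set (Fin (s+1) → ℝ)) := by rw [Finset.coe_image]
    rw [himg]
    rw [finrank_span_finset_eq_card]
    · exact Finset.card_image_of_injective T hindep.injective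
    · have h1 : LinearIndependent ℝ fun x : (T : Set (Fin (s+1))) => c x :=
        hindep.comp _ Subtype.val_injective
      have h2 := LinearIndepOn.id_image (v := c) (s := (T : Set (Fin (s+1)))) h1
      rw [← Finset.coe_image] at h2
      exact h2
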